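/- arXiv:1703.06254 — 3 statements merged into one kernel-verified Lean document; each statement's English description precedes it below -/
import Mathlib

section
/- Let N ≥ 1 and 1 > θ₀ > θ₁ > θ₂ > 0 be real numbers, and let η ∈ (0, (1/2)·((1-θ₀)/(N-θ₀))·((θ₁-θ₂)/(N-θ₂))). Let n ≥ 1 be an integer, l > 0 a real number, and a₁,…,aₙ real numbers such that: (1) aᵢ ≤ N·l for all 1 ≤ i ≤ n; (2) ∑_{i=1}^n aᵢ > n·θ₁·l; (3) the number of indices i with aᵢ > θ₀·l is less than η·n. Then there exist at least ((θ₁-θ₂)/(1-θ₂))·n indices i ∈ {1,…,n} such that for every 1 ≤ k ≤ n+1-i, (1/k)·∑_{j=i}^{i+k-1} aⱼ > θ₂·l. -/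
open scoped Classical

/-- Running minimum of `T` over `[i, n]` (equal to `T n` for `i ≥ n`). -/
private def plissM (T : ℕ → ℝ) (n : ℕ) (i : ℕ) : ℝ :=
  if h : i < n then min (T i) (plissM T n (i + 1)) else T n
termination_by n - i
decreasing_by omega

private lemma plissM_of_lt {T : ℕ → ℝ} {n i : ℕ} (h : i < n) :
    plissM T n i = min (T i) (plissM T n (i + 1)) := by
  rw [plissM]; simp [h]

private lemma plissM_self {T : ℕ → ℝ} {n : ℕ} : plissM T n n = T n := by
  rw [plissM]; simp

private lemma plissM_mono {T : ℕ → ℝ} {n i j : ℕ} (hij : i ≤ j) (hjn : j ≤ n) :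
    plissM T n i ≤ plissM T n j := by
  induction j, hij using Nat.le_induction with
  | base => exact le_rfl
  | succ j hij ih =>
      have h1 : i ≤ j := hij
      have h2 : j < n := by omega
      calc plissM T n i ≤ plissM T n j := ih (by omega)
        _ ≤ plissM T n (j + 1) := by
            rw [plissM_of_lt h2]; exact min_le_right _ _

private lemma plissM_le {T : ℕ → ℝ} {n i j : ℕ} (hij : i ≤ j) (hjn : j ≤ n) :
    plissM T n i ≤ T j := by
  refine le_trans (plissM_mono hij hjn) ?_
  rcases lt_or_eq_of_le hjn with h | h
  · rw [plissM_of_lt h]; exact min_le_left _ _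
  · subst h; rw [plissM_self]

private lemma plissM_ge (T : ℕ → ℝ) (n : ℕ) (c : ℝ) (i : ℕ) (hin : i ≤ n)
    (h : ∀ m, i ≤ m → m ≤ n → c ≤ T m) : c ≤ plissM T n i := by
  by_cases hlt : i < n
  · rw [plissM_of_lt hlt]
    exact le_min (h i le_rfl hin)
      (plissM_ge T n c (i + 1) hlt (fun m h1 h2 => h m (by omega) h2))
  · have hi : i = n := by omega
    subst hi; rw [plissM_self]; exact h _ le_rfl le_rfl
termination_by n - i
decreasing_by omega

set_option maxHeartbeats 1000000 in
/-- A variant of the Pliss lemma. -/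
theorem pliss_variant (N θ₀ θ₁ θ₂ η l : ℝ) (n : ℕ) (a : ℕ → ℝ)
    (hN : 1 ≤ N) (hθ₀1 : θ₀ < 1) (hθ₁₀ : θ₁ < θ₀) (hθ₂₁ : θ₂ < θ₁) (hθ₂ : 0 < θ₂)
    (hη0 : 0 < η)
    (hη : η < (1/2) * ((1 - θ₀)/(N - θ₀)) * ((θ₁ - θ₂)/(N - θ₂)))
    (hn : 1 ≤ n) (hl : 0 < l)
    (h1 : ∀ i ∈ Finset.Icc 1 n, a i ≤ N * l)
    (h2 : (n : ℝ) * θ₁ * l < ∑ i ∈ Finset.Icc 1 n, a i)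
    (h3 : (((Finset.Icc 1 n).filter (fun i => θ₀ * l < a i)).card : ℝ) < η * n) :
    ((θ₁ - θ₂)/(1 - θ₂)) * n ≤
      (((Finset.Icc 1 n).filter (fun i => ∀ k : ℕ, 1 ≤ k → k ≤ n + 1 - i →
        θ₂ * l < (1 / (k : ℝ)) * ∑ j ∈ Finset.Icc i (i + k - 1), a j)).card : ℝ) := by
  classical
  -- positivity facts
  have h1θ₀ : (0:ℝ) < 1 - θ₀ := by linarith
  have hNθ₀ : (0:ℝ) < N - θ₀ := by linarith
  have hθ₁₂ : (0:ℝ) < θ₁ - θ₂ := by linarith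
  have hNθ₂ : (0:ℝ) < N - θ₂ := by linarith
  have hθ₀₂ : (0:ℝ) < θ₀ - θ₂ := by linarith
  have h1θ₂ : (0:ℝ) < 1 - θ₂ := by linarith
  -- the truncated sequence and its partial sums
  set b : ℕ → ℝ := fun i => min (a i) (θ₀ * l) with hbdef
  set T : ℕ → ℝ := fun k => ∑ j ∈ Finset.Ioc 0 k, (b j - θ₂ * l) with hTdef
  have hba : ∀ i, b i ≤ a i := fun i => min_le_left _ _
  have hbθ₀ : ∀ i, b i ≤ θ₀ * l := fun i => min_le_right _ _
  have hT0 : T 0 = 0 := by simp [hTdef]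
  have hTstep : ∀ i j : ℕ, i ≤ j →
      T j - T i = ∑ m ∈ Finset.Ioc i j, (b m - θ₂ * l) := by
    intro i j hij
    have h := Finset.sum_Ioc_consecutive (fun m => b m - θ₂ * l) (Nat.zero_le i) hij
    simp only [hTdef]
    linarith [h]
  -- the auxiliary Pliss predicate
  set p : ℕ → Prop := fun i => ∀ m, i ≤ m → m ≤ n → T (i - 1) < T m with hpdef
  set P : Finset ℕ := (Finset.Icc 1 n).filter p with hPdef
  -- per-step bound for the running minimum
  have key : ∀ i ∈ Finset.range n,
      plissM T n (i + 1) - plissM T n i ≤ if p (i + 1) then (θ₀ - θ₂) * l else 0 := by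
    intro i hi
    rw [Finset.mem_range] at hi
    by_cases hp : p (i + 1)
    · rw [if_pos hp]
      have hple : ∀ m, i + 1 ≤ m → m ≤ n → T i < T m := by
        intro m h1m h2m
        have := hp m h1m h2m
        simpa using this
      have hTiM : T i ≤ plissM T n (i + 1) :=
        plissM_ge T n (T i) (i + 1) hi (fun m h1 h2 => (hple m h1 h2).le)
      have hMi : plissM T n i = T i := by
        rw [plissM_of_lt hi]; exact min_eq_left hTiM
      have hM1 : plissM T n (i + 1) ≤ T (i + 1) := plissM_le le_rfl hi
      have hTT : T (i + 1) - T i = b (i + 1) - θ₂ * l := by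
        have h := hTstep i (i + 1) (by omega)
        rw [h]
        rw [Nat.Ioc_succ_singleton]
        simp
      have := hbθ₀ (i + 1)
      rw [hMi]; linarith
    · rw [if_neg hp]
      simp only [hpdef] at hp
      push_neg at hp
      obtain ⟨m, h1m, h2m, h3m⟩ := hp
      have h3m' : T m ≤ T i := by simpa using h3m
      have hM1m : plissM T n (i + 1) ≤ T m := plissM_le h1m h2m
      have hMi : plissM T n i = plissM T n (i + 1) := by
        rw [plissM_of_lt hi]
        exact min_eq_right (le_trans hM1m (by linarith))
      rw [hMi]; simp
  -- telescoping
  have tele : ∑ i ∈ Finset.range n, (plissM T n (i + 1) - plissM T n i)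
      = plissM T n n - plissM T n 0 := Finset.sum_range_sub _ n
  have hM00 : plissM T n 0 ≤ 0 := by
    have := plissM_le (T := T) (n := n) (i := 0) (j := 0) le_rfl (by omega)
    rw [hT0] at this; exact this
  have hMn : plissM T n n = T n := plissM_self
  have hsum1 : T n ≤ ∑ i ∈ Finset.range n, (if p (i + 1) then (θ₀ - θ₂) * l else 0) := by
    have := Finset.sum_le_sum key
    rw [tele, hMn] at this
    linarith
  have hsum2 : ∑ i ∈ Finset.range n, (if p (i + 1) then (θ₀ - θ₂) * l else 0)
      = ∑ i ∈ Finset.Icc 1 n, (if p i then (θ₀ - θ₂) * l else 0) := by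
    rw [← Finset.Ico_add_one_right_eq_Icc, Finset.sum_Ico_eq_sum_range]
    simp only [Nat.add_sub_cancel]
    exact Finset.sum_congr rfl (fun i _ => by rw [Nat.add_comm 1 i])
  have hsum3 : ∑ i ∈ Finset.Icc 1 n, (if p i then (θ₀ - θ₂) * l else 0)
      = (P.card : ℝ) * ((θ₀ - θ₂) * l) := by
    rw [← Finset.sum_filter, ← hPdef, Finset.sum_const, nsmul_eq_mul]
  have hTnP : T n ≤ (P.card : ℝ) * ((θ₀ - θ₂) * l) := by
    rw [← hsum3, ← hsum2]; exact hsum1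
  -- lower bound on T n
  have hTn : T n = (∑ j ∈ Finset.Icc 1 n, b j) - n * (θ₂ * l) := by
    have : Finset.Icc 1 n = Finset.Ioc 0 n := by
      rw [← Finset.Icc_add_one_left_eq_Ioc]; rfl
    rw [hTdef]
    simp only [Finset.sum_sub_distrib, Finset.sum_const, Nat.card_Ioc, this,
      nsmul_eq_mul, Nat.sub_zero]
  have hab : ∑ j ∈ Finset.Icc 1 n, (a j - b j)
      ≤ (((Finset.Icc 1 n).filter (fun i => θ₀ * l < a i)).card : ℝ) * ((N - θ₀) * l) := by
    have step : ∀ j ∈ Finset.Icc 1 n,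
        a j - b j ≤ if θ₀ * l < a j then (N - θ₀) * l else 0 := by
      intro j hj
      by_cases hc : θ₀ * l < a j
      · rw [if_pos hc]
        have : b j = θ₀ * l := min_eq_right hc.le
        have := h1 j hj
        simp only [hbdef]
        rw [min_eq_right hc.le]
        linarith [h1 j hj]
      · rw [if_neg hc]
        push_neg at hc
        simp only [hbdef]
        rw [min_eq_left hc]
        simp
    calc ∑ j ∈ Finset.Icc 1 n, (a j - b j)
        ≤ ∑ j ∈ Finset.Icc 1 n, (if θ₀ * l < a j then (N - θ₀) * l else 0) :=
          Finset.sum_le_sum step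
      _ = (((Finset.Icc 1 n).filter (fun i => θ₀ * l < a i)).card : ℝ) * ((N - θ₀) * l) := by
          rw [← Finset.sum_filter, Finset.sum_const, nsmul_eq_mul]
  have hsumb : ∑ j ∈ Finset.Icc 1 n, b j
      > (n : ℝ) * θ₁ * l - η * n * ((N - θ₀) * l) := by
    have hsplit : ∑ j ∈ Finset.Icc 1 n, (a j - b j)
        = (∑ j ∈ Finset.Icc 1 n, a j) - ∑ j ∈ Finset.Icc 1 n, b j := by
      rw [Finset.sum_sub_distrib]
    have hpos : (0:ℝ) < (N - θ₀) * l := mul_pos hNθ₀ hl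
    have h3' : (((Finset.Icc 1 n).filter (fun i => θ₀ * l < a i)).card : ℝ) * ((N - θ₀) * l)
        < η * n * ((N - θ₀) * l) := by
      exact mul_lt_mul_of_pos_right h3 hpos
    linarith
  have hmain : (n : ℝ) * θ₁ * l - η * n * ((N - θ₀) * l) - n * (θ₂ * l)
      < (P.card : ℝ) * ((θ₀ - θ₂) * l) := by
    have := hTnP
    rw [hTn] at this
    linarith
  -- P is contained in the target set
  have hsubset : P ⊆ (Finset.Icc 1 n).filter (fun i => ∀ k : ℕ, 1 ≤ k → k ≤ n + 1 - i →
      θ₂ * l < (1 / (k : ℝ)) * ∑ j ∈ Finset.Icc i (i + k - 1), a j) := by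
    intro i hi
    rw [hPdef, Finset.mem_filter] at hi
    obtain ⟨hiIcc, hpi⟩ := hi
    rw [Finset.mem_Icc] at hiIcc
    rw [Finset.mem_filter]
    refine ⟨Finset.mem_Icc.mpr hiIcc, ?_⟩
    intro k hk1 hkn
    have him : i ≤ i + k - 1 := by omega
    have hmn : i + k - 1 ≤ n := by omega
    have hTi : T (i - 1) < T (i + k - 1) := hpi (i + k - 1) (by omega) hmn
    have hIocIcc : Finset.Ioc (i - 1) (i + k - 1) = Finset.Icc i (i + k - 1) := by
      rw [← Finset.Icc_add_one_left_eq_Ioc]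
      congr 1
      omega
    have hstep := hTstep (i - 1) (i + k - 1) (by omega)
    rw [hIocIcc] at hstep
    have hcard : (Finset.Icc i (i + k - 1)).card = k := by
      rw [Nat.card_Icc]; omega
    have hexp : ∑ m ∈ Finset.Icc i (i + k - 1), (b m - θ₂ * l)
        = (∑ m ∈ Finset.Icc i (i + k - 1), b m) - k * (θ₂ * l) := by
      rw [Finset.sum_sub_distrib, Finset.sum_const, hcard, nsmul_eq_mul]
    have hblea : ∑ m ∈ Finset.Icc i (i + k - 1), b m
        ≤ ∑ m ∈ Finset.Icc i (i + k - 1), a m :=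
      Finset.sum_le_sum (fun m _ => hba m)
    have hgt : (k : ℝ) * (θ₂ * l) < ∑ m ∈ Finset.Icc i (i + k - 1), a m := by
      have : (0:ℝ) < ∑ m ∈ Finset.Icc i (i + k - 1), (b m - θ₂ * l) := by
        rw [← hstep]; linarith
      rw [hexp] at this
      linarith
    have hk0 : (0:ℝ) < (k : ℝ) := by exact_mod_cast hk1
    rw [one_div, ← div_eq_inv_mul, lt_div_iff₀ hk0]
    linarith [hgt]
  have hcardle : (P.card : ℝ) ≤
      (((Finset.Icc 1 n).filter (fun i => ∀ k : ℕ, 1 ≤ k → k ≤ n + 1 - i →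
        θ₂ * l < (1 / (k : ℝ)) * ∑ j ∈ Finset.Icc i (i + k - 1), a j)).card : ℝ) := by
    exact_mod_cast Finset.card_le_card hsubset
  -- final arithmetic
  have hηkey : η * (N - θ₀) * (1 - θ₂) ≤ (θ₁ - θ₂) * (1 - θ₀) := by
    have hrw : (1/2 : ℝ) * ((1 - θ₀)/(N - θ₀)) * ((θ₁ - θ₂)/(N - θ₂))
        = ((1 - θ₀) * (θ₁ - θ₂)) / (2 * ((N - θ₀) * (N - θ₂))) := by
      field_simp
    rw [hrw, lt_div_iff₀ (by positivity)] at hη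
    have h2N : 1 - θ₂ ≤ 2 * (N - θ₂) := by linarith
    nlinarith [mul_le_mul_of_nonneg_left h2N (mul_nonneg hη0.le hNθ₀.le)]
  have hC0 : (0:ℝ) ≤ (P.card : ℝ) := Nat.cast_nonneg _
  have hn0 : (0:ℝ) ≤ (n : ℝ) := Nat.cast_nonneg _
  -- divide hmain by l
  have hC2 : (θ₁ - θ₂ - η * (N - θ₀)) * n ≤ (P.card : ℝ) * (θ₀ - θ₂) := by
    have h := hmain.le
    have : ((θ₁ - θ₂ - η * (N - θ₀)) * n) * l ≤ ((P.card : ℝ) * (θ₀ - θ₂)) * l := by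
      nlinarith [hmain]
    exact le_of_mul_le_mul_right this hl
  refine le_trans ?_ hcardle
  rw [div_mul_eq_mul_div, div_le_iff₀ h1θ₂]
  nlinarith [mul_le_mul_of_nonneg_right hC2 h1θ₂.le,
    mul_le_mul_of_nonneg_right hηkey hn0, hθ₀₂, hC0]
end

section
/- Under the hypotheses of the Pliss variant (aᵢ ≤ N·l for all i, ∑aᵢ > n·θ₁·l, fewer than η·n indices with aᵢ > θ₀·l, where η < (1/2)·((1-θ₀)/(N-θ₀))·((θ₁-θ₂)/(N-θ₂)) and l > 0), if I ⊆ {1,…,n} is nonempty and satisfies (1/|I|)·∑_{i∈I} aᵢ ≤ θ₂·l, then the average over the complement satisfies (1/|Iᶜ|)·∑_{i∈Iᶜ} aᵢ ≤ l. -/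
open scoped Classical

/-- Key intermediate step in the proof of the variant Pliss lemma: a set on which
the average is at most `θ₂ * l` has complement with average at most `l`. -/
theorem pliss_improved_average (N θ₀ θ₁ θ₂ η l : ℝ) (n : ℕ) (a : ℕ → ℝ)
    (hN : 1 ≤ N) (hθ₀1 : θ₀ < 1) (hθ₁₀ : θ₁ < θ₀) (hθ₂₁ : θ₂ < θ₁) (hθ₂ : 0 < θ₂)
    (hη0 : 0 < η)
    (hη : η < (1/2) * ((1 - θ₀)/(N - θ₀)) * ((θ₁ - θ₂)/(N - θ₂)))
    (hn : 1 ≤ n) (hl : 0 < l)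
    (h1 : ∀ i ∈ Finset.Icc 1 n, a i ≤ N * l)
    (h2 : (n : ℝ) * θ₁ * l < ∑ i ∈ Finset.Icc 1 n, a i)
    (h3 : (((Finset.Icc 1 n).filter (fun i => θ₀ * l < a i)).card : ℝ) < η * n)
    (I : Finset ℕ) (hI : I ⊆ Finset.Icc 1 n) (hIne : I.Nonempty)
    (havg : (I.card : ℝ)⁻¹ * ∑ i ∈ I, a i ≤ θ₂ * l) :
    (((Finset.Icc 1 n \ I).card : ℝ))⁻¹ * ∑ i ∈ Finset.Icc 1 n \ I, a i ≤ l := by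
  set S := Finset.Icc 1 n with hS
  have hNθ₀ : (0:ℝ) < N - θ₀ := by linarith
  have hNθ₂ : (0:ℝ) < N - θ₂ := by linarith
  have h1θ₀ : (0:ℝ) < 1 - θ₀ := by linarith
  have hnR : (1:ℝ) ≤ n := by exact_mod_cast hn
  have hSn : S.card = n := by simp [hS]
  have hkn : I.card ≤ n := hSn ▸ Finset.card_le_card hI
  have hk1 : 1 ≤ I.card := hIne.card_pos
  have hkR : (0:ℝ) < I.card := by exact_mod_cast hk1
  have hmR : ((S \ I).card : ℝ) = (n : ℝ) - I.card := by
    rw [Finset.card_sdiff_of_subset hI, hSn, Nat.cast_sub hkn]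
  have hsplit : (∑ i ∈ S \ I, a i) + ∑ i ∈ I, a i = ∑ i ∈ S, a i :=
    Finset.sum_sdiff hI
  have hIsum : ∑ i ∈ I, a i ≤ (I.card : ℝ) * (θ₂ * l) := by
    rwa [inv_mul_le_iff₀ hkR] at havg
  have hlow : (n:ℝ) * θ₁ * l - I.card * (θ₂ * l) < ∑ i ∈ S \ I, a i := by
    linarith
  have hub : ∑ i ∈ S \ I, a i ≤ ((S \ I).card : ℝ) * (N * l) := by
    calc ∑ i ∈ S \ I, a i ≤ ∑ _i ∈ S \ I, N * l :=
          Finset.sum_le_sum (fun i hi => h1 i (Finset.sdiff_subset hi))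
      _ = _ := by rw [Finset.sum_const, nsmul_eq_mul]
  set m : ℝ := ((S \ I).card : ℝ) with hm
  -- lower bound on m
  have hkm : (I.card : ℝ) = (n : ℝ) - m := by rw [hmR]; ring
  have hD : (θ₁ - θ₂) * n < m * (N - θ₂) := by
    have h' : ((θ₁ - θ₂) * n) * l < (m * (N - θ₂)) * l := by
      rw [hkm] at hlow; linarith
    exact lt_of_mul_lt_mul_right h' hl.le
  have hmpos : (0:ℝ) < m := by nlinarith
  -- rewrite hη
  have hC : η * (2 * (N - θ₀) * (N - θ₂)) < (1 - θ₀) * (θ₁ - θ₂) := by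
    have heq : (1/2) * ((1 - θ₀)/(N - θ₀)) * ((θ₁ - θ₂)/(N - θ₂))
        = ((1 - θ₀) * (θ₁ - θ₂)) / (2 * (N - θ₀) * (N - θ₂)) := by
      field_simp
    rw [heq, lt_div_iff₀ (by positivity)] at hη
    linarith
  -- split complement by the threshold θ₀ * l
  set B := (S \ I).filter (fun i => θ₀ * l < a i) with hB
  set C := (S \ I).filter (fun i => ¬ θ₀ * l < a i) with hCdef
  have hBcard : (B.card : ℝ) < η * n := by
    have : B.card ≤ ((S).filter (fun i => θ₀ * l < a i)).card :=
      Finset.card_le_card (Finset.filter_subset_filter _ (Finset.sdiff_subset))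
    calc (B.card : ℝ) ≤ _ := Nat.cast_le.2 this
      _ < η * n := h3
  have hcards : (B.card : ℝ) + (C.card : ℝ) = m := by
    rw [hm]
    exact_mod_cast congrArg (Nat.cast : ℕ → ℝ)
      (Finset.card_filter_add_card_filter_not (s := S \ I)
        (p := fun i => θ₀ * l < a i))
  have hBsum : ∑ i ∈ B, a i ≤ (B.card : ℝ) * (N * l) := by
    calc ∑ i ∈ B, a i ≤ ∑ _i ∈ B, N * l :=
          Finset.sum_le_sum (fun i hi => h1 i (Finset.sdiff_subset (Finset.filter_subset _ _ hi)))
      _ = _ := by rw [Finset.sum_const, nsmul_eq_mul]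
  have hCsum : ∑ i ∈ C, a i ≤ (C.card : ℝ) * (θ₀ * l) := by
    calc ∑ i ∈ C, a i ≤ ∑ _i ∈ C, θ₀ * l :=
          Finset.sum_le_sum (fun i hi => le_of_not_gt (Finset.mem_filter.1 hi).2)
      _ = _ := by rw [Finset.sum_const, nsmul_eq_mul]
  have hA : ∑ i ∈ S \ I, a i ≤ (B.card : ℝ) * (N * l) + (C.card : ℝ) * (θ₀ * l) := by
    rw [← Finset.sum_filter_add_sum_filter_not (S \ I) (fun i => θ₀ * l < a i)]
    exact add_le_add hBsum hCsum
  -- key bound : η * n * (N - θ₀) * 2 ≤ (1 - θ₀) * m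
  have hE : η * n * (N - θ₀) * 2 ≤ (1 - θ₀) * m := by
    have t1 := mul_lt_mul_of_pos_right hC (show (0:ℝ) < n by linarith)
    have t2 := mul_lt_mul_of_pos_left hD h1θ₀
    have t3 : (η * n * (N - θ₀) * 2) * (N - θ₂) < ((1 - θ₀) * m) * (N - θ₂) := by
      linarith [t1, t2]
    exact (lt_of_mul_lt_mul_right t3 hNθ₂.le).le
  have hCc : (C.card : ℝ) = m - B.card := by linarith
  rw [hCc] at hA
  have B1 := mul_lt_mul_of_pos_right hBcard (mul_pos hNθ₀ hl)
  have E1 := mul_le_mul_of_nonneg_right hE hl.le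
  rw [inv_mul_le_iff₀ hmpos]
  linarith [hA, B1, E1, mul_pos (mul_pos h1θ₀ hmpos) hl]
end

section
/- Let (X, μ) be a probability space, f : X → X measurable, x ∈ X, E ⊆ X measurable, η > 0, and q, l, n ≥ 1 integers with n ≥ q·l. Let μ_{x,n} = (1/n)·∑_{m=0}^{n-1} δ_{f^m(x)} and let R(E, η, l, f^q) = { y : |{ 0 ≤ j ≤ l-1 : f^{qj}(y) ∈ E }| > η·l }. Then μ_{x,n}(R(E, η, l, f^q)) ≤ η⁻¹·μ_{x,n}(E) + (q·l)/(2·n·η). -/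
open MeasureTheory
open scoped Classical

/-- Empirical-measure bound for recurrent points:
`μ_{x,n}(R(E, η, l, f^q)) ≤ η⁻¹·μ_{x,n}(E) + (q·l)/(2·n·η)`, where
`μ_{x,n}(A) = (1/n)·|{0 ≤ m ≤ n-1 : f^m(x) ∈ A}|` and
`R(E, η, l, f^q) = {y : |{0 ≤ j ≤ l-1 : f^{qj}(y) ∈ E}| > η·l}`. -/
theorem empirical_measure_recurrent_le {X : Type*} [MeasurableSpace X]
    (μ : Measure X) [IsProbabilityMeasure μ]
    (f : X → X) (hf : Measurable f)
    (E : Set X) (hE : MeasurableSet E)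
    (η : ℝ) (hη : 0 < η)
    (q l n : ℕ) (hq : 1 ≤ q) (hl : 1 ≤ l) (hn : 1 ≤ n) (hnql : q * l ≤ n)
    (x : X) :
    (((Finset.range n).filter (fun m => f^[m] x ∈
        {y | η * l < (((Finset.range l).filter (fun j => f^[q * j] y ∈ E)).card : ℝ)}
      )).card : ℝ) / n
      ≤ η⁻¹ * ((((Finset.range n).filter (fun m => f^[m] x ∈ E)).card : ℝ) / n)
        + (q * l : ℝ) / (2 * n * η) := by
  classical
  set C : ℕ := ((Finset.range n).filter (fun m => f^[m] x ∈ E)).card with hCdef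
  set Rf : Finset ℕ := (Finset.range n).filter (fun m => f^[m] x ∈
      {y | η * l < (((Finset.range l).filter (fun j => f^[q * j] y ∈ E)).card : ℝ)}) with hRf
  -- count function
  set cnt : ℕ → ℕ := fun m => ((Finset.range l).filter (fun j => f^[m + q * j] x ∈ E)).card with hcnt
  have hcnt_eq : ∀ m, ((Finset.range l).filter (fun j => f^[q * j] (f^[m] x) ∈ E)).card = cnt m := by
    intro m
    congr 1
    apply Finset.filter_congr
    intro j _
    rw [← Function.iterate_add_apply, Nat.add_comm]
  set S : ℕ := ∑ m ∈ Finset.range n, cnt m with hS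
  -- Step A : Markov
  have stepA : η * l * Rf.card ≤ (S : ℝ) := by
    have h1 : η * l * Rf.card ≤ ∑ m ∈ Rf, (cnt m : ℝ) := by
      have : ∀ m ∈ Rf, η * l ≤ (cnt m : ℝ) := by
        intro m hm
        rw [hRf, Finset.mem_filter] at hm
        have := hm.2
        simp only [Set.mem_setOf_eq] at this
        rw [hcnt_eq m] at this
        exact le_of_lt this
      calc η * l * Rf.card = ∑ _m ∈ Rf, η * l := by rw [Finset.sum_const]; ring
        _ ≤ ∑ m ∈ Rf, (cnt m : ℝ) := Finset.sum_le_sum this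
    refine h1.trans ?_
    rw [hS]
    push_cast
    apply Finset.sum_le_sum_of_subset_of_nonneg
    · rw [hRf]; exact Finset.filter_subset _ _
    · intro i _ _; positivity
  -- Step B : swap and shift
  have stepB : S ≤ l * C + q * (∑ j ∈ Finset.range l, j) := by
    have hswap : S = ∑ j ∈ Finset.range l,
        ((Finset.range n).filter (fun m => f^[m + q * j] x ∈ E)).card := by
      rw [hS]
      simp only [hcnt, Finset.card_filter]
      rw [Finset.sum_comm]
    rw [hswap]
    have hterm : ∀ j, ((Finset.range n).filter (fun m => f^[m + q * j] x ∈ E)).card ≤ C + q * j := by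
      intro j
      have h1 : ((Finset.range n).filter (fun m => f^[m + q * j] x ∈ E)).card
          ≤ ((Finset.range (n + q * j)).filter (fun k => f^[k] x ∈ E)).card := by
        apply Finset.card_le_card_of_injOn (fun m => m + q * j)
        · intro m hm
          simp only [Finset.mem_coe, Finset.mem_filter, Finset.mem_range] at hm ⊢
          exact ⟨by omega, hm.2⟩
        · intro a _ b _ h
          simpa using h
      refine h1.trans ?_
      have hsplit : Finset.range (n + q * j) = Finset.range n ∪ Finset.Ico n (n + q * j) := by
        rw [Finset.range_eq_Ico, Finset.range_eq_Ico]
        exact (Finset.Ico_union_Ico_eq_Ico (Nat.zero_le n) (Nat.le_add_right n _)).symm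
      rw [hsplit, Finset.filter_union]
      refine (Finset.card_union_le _ _).trans ?_
      exact Nat.add_le_add le_rfl ((Finset.card_filter_le _ _).trans (by simp [Nat.card_Ico]))
    calc ∑ j ∈ Finset.range l, ((Finset.range n).filter (fun m => f^[m + q * j] x ∈ E)).card
        ≤ ∑ j ∈ Finset.range l, (C + q * j) := Finset.sum_le_sum (fun j _ => hterm j)
      _ = l * C + q * (∑ j ∈ Finset.range l, j) := by
          rw [Finset.sum_add_distrib, Finset.sum_const, ← Finset.mul_sum]
          simp [Nat.smul_one_eq_cast, mul_comm]
  -- Gauss sum bound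
  have hgauss : (2 : ℕ) * (∑ j ∈ Finset.range l, j) ≤ l * l := by
    have h := Finset.sum_range_id_mul_two l
    have h2 : l * (l - 1) ≤ l * l := Nat.mul_le_mul_left l (Nat.sub_le l 1)
    omega
  -- combine to key inequality: η * Rf.card ≤ C + q*l/2
  have hl0 : (0:ℝ) < l := by exact_mod_cast hl
  have key : η * Rf.card ≤ (C : ℝ) + (q * l : ℝ) / 2 := by
    have hSb : (S : ℝ) ≤ l * C + q * (l * l) / 2 := by
      have h1 : (S:ℝ) ≤ (l * C + q * (∑ j ∈ Finset.range l, j) : ℕ) := by exact_mod_cast stepB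
      refine h1.trans ?_
      push_cast
      have h2 : ((∑ j ∈ Finset.range l, j : ℕ) : ℝ) ≤ (l*l : ℝ)/2 := by
        rw [le_div_iff₀ (by norm_num : (0:ℝ) < 2)]
        exact_mod_cast (by omega : (∑ j ∈ Finset.range l, j) * 2 ≤ l * l)
      push_cast at h2
      have h4 : (q:ℝ) * (∑ x ∈ Finset.range l, (x:ℝ)) ≤ (q:ℝ) * ((l*l:ℝ)/2) :=
        mul_le_mul_of_nonneg_left h2 (by positivity)
      linarith
    have h3 : η * l * Rf.card ≤ l * C + q * (l * l) / 2 := stepA.trans hSb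
    nlinarith [h3, hl0]
  -- finish
  have hn0 : (0:ℝ) < n := by exact_mod_cast hn
  have hRfcast : (((Finset.range n).filter (fun m => f^[m] x ∈
        {y | η * l < (((Finset.range l).filter (fun j => f^[q * j] y ∈ E)).card : ℝ)})).card : ℝ)
      = (Rf.card : ℝ) := by rw [hRf]
  rw [hRfcast, hCdef]
  calc (Rf.card : ℝ) / n = (η * Rf.card) / (n * η) := by
        rw [mul_comm (n:ℝ) η, mul_div_mul_left _ _ (ne_of_gt hη)]
    _ ≤ ((C:ℝ) + (q*l:ℝ)/2) / (n * η) := by gcongr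
    _ = η⁻¹ * ((C:ℝ) / n) + (q * l : ℝ) / (2 * n * η) := by field_simp
end
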